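/- For each positive integer n there exists a sum f(θ) = cos a₁θ + ⋯ + cos aₙθ with distinct positive integers a₁ < ⋯ < aₙ such that f(θ) ≥ −√(2n) − 1/2 for all real θ. -/

import Mathlib

open Real

namespace Stmt14Aux

open Finset

/-! ### elementary trig bounds -/

lemma triple_bound (A B : ℝ) : -(3/2:ℝ) ≤ Real.cos A + Real.cos B + Real.cos (A+B) := by
  have h := Real.cos_add A B
  nlinarith [sq_nonneg (Real.cos A + Real.cos B + 1), sq_nonneg (Real.sin A - Real.sin B),
    Real.sin_sq_add_cos_sq A, Real.sin_sq_add_cos_sq B]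

/-! ### the Sidon (difference) block -/

def Ublk (m : ℕ) : Finset (ℕ × ℕ) :=
  ((range (m+1)) ×ˢ (range (m+1))).filter (fun p => p.1 < p.2)

lemma Ublk_eq_offdiag_filter (m : ℕ) :
    Ublk m = (range (m+1)).offDiag.filter (fun p => p.1 < p.2) := by
  unfold Ublk
  ext p
  simp only [Finset.mem_filter, Finset.mem_product, Finset.mem_offDiag]
  constructor
  · rintro ⟨⟨h1, h2⟩, h3⟩; exact ⟨⟨h1, h2, Nat.ne_of_lt h3⟩, h3⟩
  · rintro ⟨⟨h1, h2, _⟩, h3⟩; exact ⟨⟨h1, h2⟩, h3⟩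

lemma card_Ublk (m : ℕ) : 2 * (Ublk m).card = m * (m+1) := by
  classical
  set r := range (m+1)
  set V := r.offDiag.filter (fun p => ¬ p.1 < p.2) with hV
  have hpart : (Ublk m).card + V.card = r.offDiag.card := by
    rw [Ublk_eq_offdiag_filter]
    exact Finset.card_filter_add_card_filter_not _
  have hVU : V.card = (Ublk m).card := by
    rw [Ublk_eq_offdiag_filter]
    apply Finset.card_nbij' (fun p => (p.2, p.1)) (fun p => (p.2, p.1))
    · intro p hp
      simp only [hV, Finset.mem_coe, Finset.mem_filter, Finset.mem_offDiag] at hp ⊢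
      obtain ⟨⟨h1, h2, h3⟩, h4⟩ := hp
      exact ⟨⟨h2, h1, Ne.symm h3⟩, lt_of_le_of_ne (not_lt.mp h4) (Ne.symm h3)⟩
    · intro p hp
      simp only [hV, Finset.mem_coe, Finset.mem_filter, Finset.mem_offDiag] at hp ⊢
      obtain ⟨⟨h1, h2, h3⟩, h4⟩ := hp
      exact ⟨⟨h2, h1, Ne.symm h3⟩, not_lt.mpr (le_of_lt h4)⟩
    · intro p _; rfl
    · intro p _; rfl
  have hcard : r.offDiag.card = (m+1) * (m+1) - (m+1) := by
    rw [Finset.offDiag_card]; simp [r]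
  have hx : (m+1)*(m+1) = m*(m+1) + (m+1) := by ring
  omega

lemma sum_Ublk (m : ℕ) (θ : ℝ) :
    -((m+1 : ℝ)/2) ≤ ∑ p ∈ Ublk m, Real.cos (((2^p.2 - 2^p.1 : ℕ) : ℝ) * θ) := by
  classical
  set r := range (m+1)
  set F : ℕ × ℕ → ℝ := fun p => Real.cos ((2^p.2 : ℝ) * θ - (2^p.1 : ℝ) * θ) with hF
  have hcast : ∀ p ∈ Ublk m, Real.cos (((2^p.2 - 2^p.1 : ℕ) : ℝ) * θ) = F p := by
    intro p hp
    have hlt : p.1 < p.2 := by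
      simp only [Ublk, Finset.mem_filter] at hp; exact hp.2
    have hle : (2:ℕ)^p.1 ≤ 2^p.2 := Nat.pow_le_pow_right (by norm_num) (le_of_lt hlt)
    rw [hF]
    push_cast [Nat.cast_sub hle]
    ring_nf
  rw [Finset.sum_congr rfl hcast]
  have key : (0:ℝ) ≤ ∑ p ∈ r ×ˢ r, F p := by
    have expand : ∑ p ∈ r ×ˢ r, F p =
        (∑ k ∈ r, Real.cos (2^k * θ))^2 + (∑ k ∈ r, Real.sin (2^k * θ))^2 := by
      rw [sq, sq, Finset.sum_mul_sum, Finset.sum_mul_sum, Finset.sum_product]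
      rw [← Finset.sum_add_distrib]
      apply Finset.sum_congr rfl; intro j _
      rw [← Finset.sum_add_distrib]
      apply Finset.sum_congr rfl; intro k _
      show Real.cos ((2^k:ℝ)*θ - (2^j:ℝ)*θ) = _
      rw [Real.cos_sub]
      ring
    rw [expand]; positivity
  have hsplit : ∑ p ∈ r ×ˢ r, F p = (m+1 : ℝ) + 2 * ∑ p ∈ Ublk m, F p := by
    rw [← Finset.diag_union_offDiag r, Finset.sum_union (Finset.disjoint_diag_offDiag r)]
    have hdiag : ∑ p ∈ r.diag, F p = (m+1 : ℝ) := by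
      rw [Finset.sum_diag]
      have : ∀ a ∈ r, F (a, a) = 1 := by
        intro a _; rw [hF]; simp
      rw [Finset.sum_congr rfl this]
      simp [r]
    have hoff : ∑ p ∈ r.offDiag, F p = 2 * ∑ p ∈ Ublk m, F p := by
      rw [← Finset.sum_filter_add_sum_filter_not r.offDiag (fun p => p.1 < p.2)]
      rw [← Ublk_eq_offdiag_filter]
      have : ∑ p ∈ r.offDiag.filter (fun p => ¬ p.1 < p.2), F p = ∑ p ∈ Ublk m, F p := by
        rw [Ublk_eq_offdiag_filter]
        apply Finset.sum_nbij' (fun p => (p.2, p.1)) (fun p => (p.2, p.1))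
        · intro p hp
          simp only [Finset.mem_filter, Finset.mem_offDiag] at hp ⊢
          obtain ⟨⟨h1, h2, h3⟩, h4⟩ := hp
          exact ⟨⟨h2, h1, Ne.symm h3⟩, lt_of_le_of_ne (not_lt.mp h4) (Ne.symm h3)⟩
        · intro p hp
          simp only [Finset.mem_filter, Finset.mem_offDiag] at hp ⊢
          obtain ⟨⟨h1, h2, h3⟩, h4⟩ := hp
          exact ⟨⟨h2, h1, Ne.symm h3⟩, not_lt.mpr (le_of_lt h4)⟩
        · intro p _; rfl
        · intro p _; rfl
        · intro p _
          show Real.cos ((2^p.2:ℝ)*θ - (2^p.1:ℝ)*θ) = Real.cos ((2^p.1:ℝ)*θ - (2^p.2:ℝ)*θ)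
          rw [← Real.cos_neg]; ring_nf
      rw [this]; ring
    rw [hdiag, hoff]
  rw [hsplit] at key
  linarith

/-! ### injectivity of differences of powers of two -/

lemma pow_sub_key (a b c d : ℕ) (hab : a < b) (hcd : c < d)
    (h : 2^b + 2^c = 2^d + 2^a) (hac : a ≤ c) : a = c ∧ b = d := by
  rcases eq_or_lt_of_le hac with heq | hlt
  · subst heq
    have : (2:ℕ)^b = 2^d := by omega
    have hbd : b = d := Nat.pow_right_injective (le_refl 2) this
    exact ⟨rfl, hbd⟩
  · exfalso
    have had : a < d := by
      by_contra hda
      push_neg at hda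
      have h1 : (2:ℕ)^d ≤ 2^a := Nat.pow_le_pow_right (by norm_num) hda
      have h2 : (2:ℕ)^a + 2^a ≤ 2^b := by
        have : (2:ℕ)^(a+1) ≤ 2^b := Nat.pow_le_pow_right (by norm_num) hab
        rw [pow_succ] at this; omega
      have h3 : (0:ℕ) < 2^c := Nat.pow_pos (n := c) (by norm_num)
      omega
    have hdvd : (2:ℕ)^(a+1) ∣ 2^a := by
      have d1 : (2:ℕ)^(a+1) ∣ 2^b := pow_dvd_pow 2 hab
      have d2 : (2:ℕ)^(a+1) ∣ 2^c := pow_dvd_pow 2 hlt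
      have d3 : (2:ℕ)^(a+1) ∣ 2^d := pow_dvd_pow 2 had
      have : (2:ℕ)^(a+1) ∣ 2^d + 2^a := h ▸ Nat.dvd_add d1 d2
      exact (Nat.dvd_add_right d3).mp this
    have := Nat.le_of_dvd (Nat.pow_pos (n := a) (by norm_num)) hdvd
    have h2 : (2:ℕ)^a < 2^(a+1) := Nat.pow_lt_pow_right (by norm_num) (Nat.lt_succ_self a)
    omega

lemma pow_sub_inj (a b c d : ℕ) (hab : a < b) (hcd : c < d)
    (h : 2^b - 2^a = 2^d - 2^c) : a = c ∧ b = d := by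
  have h1 : (2:ℕ)^a ≤ 2^b := Nat.pow_le_pow_right (by norm_num) (le_of_lt hab)
  have h2 : (2:ℕ)^c ≤ 2^d := Nat.pow_le_pow_right (by norm_num) (le_of_lt hcd)
  have h' : 2^b + 2^c = 2^d + 2^a := by omega
  rcases le_total a c with hac | hca
  · exact pow_sub_key a b c d hab hcd h' hac
  · have := pow_sub_key c d a b hcd hab (by omega) hca
    exact ⟨this.1.symm, this.2.symm⟩

/-! ### the B set -/

def Bset (m : ℕ) : Finset ℕ := (Ublk m).image (fun p => 2^p.2 - 2^p.1)

lemma Ublk_injOn (m : ℕ) :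
    Set.InjOn (fun p : ℕ × ℕ => 2^p.2 - 2^p.1) (Ublk m) := by
  intro p hp q hq h
  simp only [Finset.coe_filter, Set.mem_setOf_eq, Ublk, Finset.mem_coe,
    Finset.mem_filter] at hp hq
  have := pow_sub_inj p.1 p.2 q.1 q.2 hp.2 hq.2 h
  exact Prod.ext this.1 this.2

lemma Bset_card (m : ℕ) : 2 * (Bset m).card = m * (m+1) := by
  rw [Bset, Finset.card_image_of_injOn (Ublk_injOn m)]
  exact card_Ublk m

lemma Bset_sum (m : ℕ) (θ : ℝ) :
    -((m+1 : ℝ)/2) ≤ ∑ x ∈ Bset m, Real.cos (x * θ) := by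
  rw [Bset, Finset.sum_image (fun p hp q hq h => Ublk_injOn m hp hq h)]
  exact sum_Ublk m θ

lemma Bset_bounds {m x : ℕ} (hx : x ∈ Bset m) : 0 < x ∧ x < 2^m := by
  rw [Bset, Finset.mem_image] at hx
  obtain ⟨p, hp, rfl⟩ := hx
  simp only [Ublk, Finset.mem_filter, Finset.mem_product, Finset.mem_range] at hp
  obtain ⟨⟨h1, h2⟩, h3⟩ := hp
  have hle : (2:ℕ)^p.1 < 2^p.2 := Nat.pow_lt_pow_right (by norm_num) h3
  have hub : (2:ℕ)^p.2 ≤ 2^m := Nat.pow_le_pow_right (by norm_num) (by omega)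
  have hp1 : (0:ℕ) < 2^p.1 := Nat.pow_pos (n := _) (by norm_num)
  omega

/-! ### triples -/

def trip (N i : ℕ) : Finset ℕ := {N * 4^i, 2*(N*4^i), 3*(N*4^i)}

lemma trip_mem_bounds {N i x : ℕ} (hN : 0 < N) (hx : x ∈ trip N i) :
    N * 4^i ≤ x ∧ x ≤ 3*(N*4^i) := by
  have hpos : 0 < N * 4^i := Nat.mul_pos hN (Nat.pow_pos (n := i) (by norm_num))
  simp only [trip, Finset.mem_insert, Finset.mem_singleton] at hx
  rcases hx with h | h | h <;> omega

lemma trip_card {N i : ℕ} (hN : 0 < N) : (trip N i).card = 3 := by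
  have hpos : 0 < N * 4^i := Nat.mul_pos hN (Nat.pow_pos (n := i) (by norm_num))
  rw [trip, Finset.card_insert_of_notMem, Finset.card_insert_of_notMem,
    Finset.card_singleton]
  · simp; omega
  · simp; omega

lemma trip_scale_lt {N i j : ℕ} (hN : 0 < N) (hij : i < j) :
    3 * (N * 4^i) < N * 4^j := by
  have h : 4^(i+1) ≤ 4^j := Nat.pow_le_pow_right (by norm_num) hij
  have h2 : (4:ℕ)^(i+1) = 4 * 4^i := by rw [pow_succ]; ring
  have h3 : 0 < 4^i := Nat.pow_pos (n := i) (by norm_num)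
  calc 3 * (N * 4^i) < N * (4 * 4^i) := by nlinarith
    _ ≤ N * 4^j := by rw [← h2]; exact Nat.mul_le_mul_left N h

def Trs (N t : ℕ) : Finset ℕ := (range t).biUnion (trip N)

lemma trip_pairwise_disj {N t : ℕ} (hN : 0 < N) :
    ∀ i ∈ range t, ∀ j ∈ range t, i ≠ j → Disjoint (trip N i) (trip N j) := by
  intro i _ j _ hij
  rw [Finset.disjoint_left]
  intro x hxi hxj
  rcases Nat.lt_or_ge i j with h | h
  · have b1 := (trip_mem_bounds hN hxi).2
    have b2 := (trip_mem_bounds hN hxj).1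
    have := trip_scale_lt hN h
    omega
  · have h' : j < i := lt_of_le_of_ne h (Ne.symm hij)
    have b1 := (trip_mem_bounds hN hxj).2
    have b2 := (trip_mem_bounds hN hxi).1
    have := trip_scale_lt hN h'
    omega

lemma Trs_card {N t : ℕ} (hN : 0 < N) : (Trs N t).card = 3 * t := by
  rw [Trs, Finset.card_biUnion (trip_pairwise_disj hN)]
  simp [trip_card hN, mul_comm]

lemma Trs_mem_bounds {N t x : ℕ} (hN : 0 < N) (hx : x ∈ Trs N t) :
    N ≤ x ∧ x < N * 4^t := by
  rw [Trs, Finset.mem_biUnion] at hx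
  obtain ⟨i, hi, hxi⟩ := hx
  rw [Finset.mem_range] at hi
  have hb := trip_mem_bounds hN hxi
  have h1 : N ≤ N * 4^i := Nat.le_mul_of_pos_right N (Nat.pow_pos (n := i) (by norm_num))
  have h2 := trip_scale_lt hN hi
  omega

lemma Trs_sum (N t : ℕ) (hN : 0 < N) (θ : ℝ) :
    -(3/2 : ℝ) * t ≤ ∑ x ∈ Trs N t, Real.cos (x * θ) := by
  rw [Trs, Finset.sum_biUnion (trip_pairwise_disj hN)]
  calc -(3/2 : ℝ) * t = ∑ _i ∈ range t, -(3/2 : ℝ) := by simp [mul_comm]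
    _ ≤ _ := by
      apply Finset.sum_le_sum
      intro i _
      have hpos : 0 < N * 4^i := Nat.mul_pos hN (Nat.pow_pos (n := i) (by norm_num))
      have hsum : ∑ x ∈ trip N i, Real.cos (x * θ) =
          Real.cos ((N*4^i : ℕ) * θ) + Real.cos ((2*(N*4^i) : ℕ) * θ)
            + Real.cos ((3*(N*4^i) : ℕ) * θ) := by
        rw [trip, Finset.sum_insert, Finset.sum_insert, Finset.sum_singleton]
        · ring
        · simp; omega
        · simp; omega
      rw [hsum]
      have h3 : ((3*(N*4^i) : ℕ) : ℝ) * θ = ((N*4^i : ℕ) : ℝ) * θ + ((2*(N*4^i) : ℕ) : ℝ) * θ := by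
        push_cast; ring
      rw [h3]
      exact triple_bound _ _

/-! ### the E set -/

def Eset (z e : ℕ) : Finset ℕ := if e = 1 then {z} else if e = 2 then {z, 2*z} else ∅

lemma Eset_card {z e : ℕ} (hz : 0 < z) (he : e < 3) : (Eset z e).card = e := by
  interval_cases e
  · simp [Eset]
  · simp [Eset]
  · show ({z, 2*z} : Finset ℕ).card = 2
    rw [Finset.card_insert_of_notMem (by simp; omega), Finset.card_singleton]

lemma Eset_bounds {z e x : ℕ} (hx : x ∈ Eset z e) : z ≤ x ∧ x ≤ 2*z := by
  unfold Eset at hx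
  split_ifs at hx <;> simp_all <;> omega

lemma Eset_sum (z e : ℕ) (hz : 0 < z) (θ : ℝ) :
    -(if e = 0 then (0:ℝ) else 9/8) ≤ ∑ x ∈ Eset z e, Real.cos (x * θ) := by
  rcases e with _ | _ | _ | k
  · simp [Eset]
  · have : Eset z 1 = {z} := by simp [Eset]
    rw [this, Finset.sum_singleton, if_neg (by omega)]
    nlinarith [Real.neg_one_le_cos ((z:ℝ)*θ)]
  · have : Eset z 2 = {z, 2*z} := by simp [Eset]
    rw [this, Finset.sum_insert (by simp; omega), Finset.sum_singleton, if_neg (by omega)]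
    have h2 : ((2*z : ℕ) : ℝ) * θ = 2 * ((z:ℝ) * θ) := by push_cast; ring
    rw [h2]
    have h := Real.cos_two_mul ((z:ℝ)*θ)
    nlinarith [sq_nonneg (2 * Real.cos ((z:ℝ)*θ) + 1/2)]
  · have : Eset z (k+3) = ∅ := by simp [Eset]
    rw [this, Finset.sum_empty, if_neg (by omega)]
    norm_num

/-! ### final numeric inequality -/

lemma final_num (m t e : ℕ) (h3te : 3*t + e ≤ m) (he : e < 3) :
    ((m:ℝ)/2 + (3/2)*t + (if e = 0 then (0:ℝ) else 9/8))^2 ≤ (m:ℝ)*(m+1) + 6*t + 2*e := by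
  have hm : (3*(t:ℝ) + e) ≤ m := by exact_mod_cast h3te
  have ht : (0:ℝ) ≤ t := Nat.cast_nonneg t
  have he2 : (e:ℝ) ≤ 2 := by exact_mod_cast Nat.lt_succ_iff.mp he
  have he0 : (0:ℝ) ≤ e := Nat.cast_nonneg e
  by_cases h : e = 0
  · rw [if_pos h]
    subst h
    push_cast at *
    nlinarith [mul_nonneg ht (by linarith : (0:ℝ) ≤ (m:ℝ) - 3*t), sq_nonneg ((m:ℝ) - 3*t)]
  · have he1 : (1:ℝ) ≤ e := by
      have : 1 ≤ e := Nat.one_le_iff_ne_zero.mpr h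
      exact_mod_cast this
    rw [if_neg h]
    nlinarith [mul_nonneg ht (by linarith : (0:ℝ) ≤ (m:ℝ) - 3*t - e), sq_nonneg ((m:ℝ) - 3*t - e), mul_nonneg ht ht]

end Stmt14Aux

open Stmt14Aux Finset

theorem stmt_14 (n : ℕ) (hn : 0 < n) :
    ∃ a : Fin n → ℕ, StrictMono a ∧ (∀ i, 0 < a i) ∧
      ∀ θ : ℝ, ∑ i, cos (a i * θ) ≥ -Real.sqrt (2 * n) - 1/2 := by
  classical
  -- choose m maximal with m(m+1) ≤ 2n
  set P : ℕ → Prop := fun k => k*(k+1) ≤ 2*n with hPdef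
  have hP1 : P 1 := by simp only [hPdef]; omega
  set m := Nat.findGreatest P (2*n) with hmdef
  have hm1 : 1 ≤ m := Nat.le_findGreatest (by omega) hP1
  have hPm : m*(m+1) ≤ 2*n := Nat.findGreatest_spec (P := P) (by omega) hP1
  have hub : 2*n < (m+1)*(m+2) := by
    by_contra hcon
    push_neg at hcon
    have hb : m + 1 ≤ 2*n := by nlinarith
    have hng := Nat.findGreatest_is_greatest (P := P) (lt_add_one m) hb
    exact hng (by show (m+1)*(m+1+1) ≤ 2*n; nlinarith)
  -- decompose n
  have heven : 2 ∣ m*(m+1) := (Nat.even_mul_succ_self m).two_dvd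
  obtain ⟨Tm, hTm⟩ := heven
  have hTm_le : Tm ≤ n := by omega
  set r := n - Tm with hrdef
  have hr : r ≤ m := by
    have : (m+1)*(m+2) = m*(m+1) + 2*(m+1) := by ring
    omega
  set t := r / 3 with htdef
  set e := r % 3 with hedef
  have he3 : e < 3 := Nat.mod_lt r (by norm_num)
  have hrte : r = 3*t + e := (Nat.div_add_mod r 3).symm
  have h3te : 3*t + e ≤ m := by omega
  have h2n : 2*n = m*(m+1) + 6*t + 2*e := by omega
  -- the frequency set
  set N := 2^m with hNdef
  have hN : 0 < N := Nat.pow_pos (n := m) (by norm_num)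
  set z := N * 4^t with hzdef
  have hz : 0 < z := Nat.mul_pos hN (Nat.pow_pos (n := t) (by norm_num))
  set S := (Bset m ∪ Trs N t) ∪ Eset z e with hSdef
  -- disjointness
  have hd1 : Disjoint (Bset m) (Trs N t) := by
    rw [Finset.disjoint_left]
    intro x hxB hxT
    have h1 := (Bset_bounds hxB).2
    have h2 := (Trs_mem_bounds hN hxT).1
    rw [← hNdef] at h1
    omega
  have hd2 : Disjoint (Bset m ∪ Trs N t) (Eset z e) := by
    rw [Finset.disjoint_left]
    intro x hxU hxE
    have hzx := (Eset_bounds hxE).1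
    have hNz : N ≤ z := Nat.le_mul_of_pos_right N (Nat.pow_pos (n := t) (by norm_num))
    rcases Finset.mem_union.mp hxU with h | h
    · have h1 := (Bset_bounds h).2
      rw [← hNdef] at h1
      omega
    · have h1 := (Trs_mem_bounds hN h).2
      rw [← hzdef] at h1
      omega
  -- cardinality
  have hcardB : (Bset m).card = Tm := by
    have := Bset_card m
    omega
  have hcard : S.card = n := by
    rw [hSdef, Finset.card_union_of_disjoint hd2, Finset.card_union_of_disjoint hd1,
      hcardB, Trs_card hN, Eset_card hz he3]
    omega
  -- elements are positive
  have hpos : ∀ x ∈ S, 0 < x := by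
    intro x hx
    rcases Finset.mem_union.mp hx with hx | hx
    · rcases Finset.mem_union.mp hx with hx | hx
      · exact (Bset_bounds hx).1
      · have := (Trs_mem_bounds hN hx).1; omega
    · have := (Eset_bounds hx).1; omega
  -- the sum bound on S
  have hsum : ∀ θ : ℝ, -((m+1 : ℝ)/2) + (-(3/2 : ℝ) * t) + (-(if e = 0 then (0:ℝ) else 9/8))
      ≤ ∑ x ∈ S, Real.cos (x * θ) := by
    intro θ
    rw [hSdef, Finset.sum_union hd2, Finset.sum_union hd1]
    have b1 := Bset_sum m θ
    have b2 := Trs_sum N t hN θ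
    have b3 := Eset_sum z e hz θ
    linarith
  -- define a
  refine ⟨fun i => (S.orderIsoOfFin hcard i : ℕ), ?_, ?_, ?_⟩
  · intro i j hij
    exact_mod_cast (S.orderIsoOfFin hcard).strictMono hij
  · intro i
    exact hpos _ (S.orderIsoOfFin hcard i).2
  · intro θ
    have hEq : ∑ i : Fin n, Real.cos ((S.orderIsoOfFin hcard i : ℕ) * θ)
        = ∑ x ∈ S, Real.cos (x * θ) := by
      rw [← Finset.sum_coe_sort S (fun x => Real.cos (x * θ))]
      exact Fintype.sum_equiv (S.orderIsoOfFin hcard).toEquiv _ _ (fun i => rfl)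
    rw [ge_iff_le, hEq]
    refine le_trans ?_ (hsum θ)
    -- numeric: (m+1)/2 + (3/2)t + c ≤ sqrt(2n) + 1/2
    have hx0 : (0:ℝ) ≤ (m:ℝ)/2 + (3/2)*t + (if e = 0 then (0:ℝ) else 9/8) := by
      have : (0:ℝ) ≤ (m:ℝ) := Nat.cast_nonneg m
      have : (0:ℝ) ≤ (t:ℝ) := Nat.cast_nonneg t
      split_ifs <;> positivity
    have hy0 : (0:ℝ) ≤ 2*(n:ℝ) := by positivity
    have hsq : ((m:ℝ)/2 + (3/2)*t + (if e = 0 then (0:ℝ) else 9/8))^2 ≤ 2*(n:ℝ) := by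
      have h1 := final_num m t e h3te he3
      have h2 : (2:ℝ)*(n:ℝ) = (m:ℝ)*(m+1) + 6*t + 2*e := by
        exact_mod_cast congrArg (fun k : ℕ => (k:ℝ)) h2n
      linarith
    have hle : (m:ℝ)/2 + (3/2)*t + (if e = 0 then (0:ℝ) else 9/8) ≤ Real.sqrt (2*n) :=
      (Real.le_sqrt hx0 hy0).mpr hsq
    have : -Real.sqrt (2*n) ≤ -((m:ℝ)/2 + (3/2)*t + (if e = 0 then (0:ℝ) else 9/8)) := by
      linarith
    linarith
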